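/- If U is an extremal map for the sharp vector Euclidean Sobolev inequality, i.e., (∫ F(U) dx)^{2/2*} = M_F^{2/2*} A₀(n) ∫ |∇U|² dx with U ≠ 0, then U = t u for some t ∈ S^{k−1} with F(t) = M_F and some scalar extremal function u of the sharp scalar Sobolev inequality. -/

import Mathlib

/-- strict two-point AM-GM -/
lemma stmt6_amgm_strict {x y a b : ℝ} (hx : 0 < x) (hy : 0 < y) (ha : 0 < a) (hb : 0 < b)
    (hab : a + b = 1) (hxy : x ≠ y) : x ^ a * y ^ b < a * x + b * y := by
  have hlog := strictConcaveOn_log_Ioi.2 (Set.mem_Ioi.2 hx) (Set.mem_Ioi.2 hy) hxy ha hb hab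
  have h1 : x ^ a * y ^ b = Real.exp (a * Real.log x + b * Real.log y) := by
    rw [Real.exp_add, Real.rpow_def_of_pos hx, Real.rpow_def_of_pos hy, mul_comm (Real.log x),
      mul_comm (Real.log y)]
  have h2 : (0:ℝ) < a * x + b * y := by positivity
  rw [h1, ← Real.exp_log h2]
  apply Real.exp_lt_exp.2
  simpa [smul_eq_mul] using hlog

/-- Young's inequality equality case -/
lemma stmt6_young_eq {r s a b : ℝ} (hrs : r.HolderConjugate s) (ha : 0 ≤ a) (hb : 0 ≤ b)
    (h : a * b = a ^ r / r + b ^ s / s) : a ^ r = b ^ s := by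
  have hr1 : 1 < r := hrs.lt
  have hr0 : (0:ℝ) < r := by linarith
  have hs0 : (0:ℝ) < s := hrs.symm.pos
  have hinv : r⁻¹ + s⁻¹ = 1 := hrs.inv_add_inv_eq_one
  rcases ha.eq_or_lt with h0 | hA
  · rw [← h0, Real.zero_rpow (ne_of_gt hr0)] at h ⊢
    simp only [zero_mul, zero_div, zero_add] at h
    rcases div_eq_zero_iff.1 h.symm with h' | h'
    · exact h'.symm
    · exact absurd h' (ne_of_gt hs0)
  rcases hb.eq_or_lt with h0 | hB
  · rw [← h0, Real.zero_rpow (ne_of_gt hs0)] at h ⊢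
    simp only [mul_zero, zero_div, add_zero] at h
    rcases div_eq_zero_iff.1 h.symm with h' | h'
    · exact h'
    · exact absurd h' (ne_of_gt hr0)
  · by_contra hne
    have hstrict := stmt6_amgm_strict (x := a ^ r) (y := b ^ s) (a := r⁻¹) (b := s⁻¹)
      (Real.rpow_pos_of_pos hA r) (Real.rpow_pos_of_pos hB s)
      (by positivity) (by positivity) hinv hne
    have h1 : (a ^ r) ^ r⁻¹ = a := Real.rpow_rpow_inv ha (ne_of_gt hr0)
    have h2 : (b ^ s) ^ s⁻¹ = b := Real.rpow_rpow_inv hb (ne_of_gt hs0)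
    rw [h1, h2] at hstrict
    rw [div_eq_inv_mul, div_eq_inv_mul] at h
    linarith

private lemma stmt6_rpow_split {x e : ℝ} (hx : 0 < x) : x ^ e = x * x ^ (e - 1) := by
  have h1 : x ^ ((1:ℝ) + (e - 1)) = x ^ (1:ℝ) * x ^ (e - 1) := Real.rpow_add hx 1 (e - 1)
  have h2 : (1:ℝ) + (e - 1) = e := by ring
  rw [h2, Real.rpow_one] at h1
  exact h1

/-- strict superadditivity of rpow with exponent in (0,1) -/
lemma stmt6_rpow_superadd {x y e : ℝ} (hx : 0 < x) (hy : 0 < y) (he0 : 0 < e) (he1 : e < 1) :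
    (x + y) ^ e < x ^ e + y ^ e := by
  have hxy : 0 < x + y := by linarith
  have hex : (x + y) ^ (e - 1) < x ^ (e - 1) :=
    Real.rpow_lt_rpow_of_neg hx (by linarith) (by linarith)
  have hey : (x + y) ^ (e - 1) < y ^ (e - 1) :=
    Real.rpow_lt_rpow_of_neg hy (by linarith) (by linarith)
  have hxe : x * (x + y) ^ (e - 1) < x ^ e := by
    rw [stmt6_rpow_split hx]
    exact mul_lt_mul_of_pos_left hex hx
  have hye : y * (x + y) ^ (e - 1) < y ^ e := by
    rw [stmt6_rpow_split hy]
    exact mul_lt_mul_of_pos_left hey hy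
  have hsplit : (x + y) ^ e = x * (x + y) ^ (e - 1) + y * (x + y) ^ (e - 1) := by
    rw [stmt6_rpow_split hxy, add_mul]
  linarith
open MeasureTheory Real

variable {α : Type*} [MeasurableSpace α] {μ : Measure α}

private lemma stmt6_rpow_zero_of {x e : ℝ} (hx : 0 ≤ x) (he : e ≠ 0) (h : x ^ e = 0) : x = 0 := by
  by_contra hne
  have hxpos : 0 < x := lt_of_le_of_ne hx (Ne.symm hne)
  exact absurd h (ne_of_gt (Real.rpow_pos_of_pos hxpos e))

/-- Hölder inequality for nonneg real functions, with integrability of the product -/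
lemma stmt6_holder {r s : ℝ} (hrs : r.HolderConjugate s) (f g : α → ℝ)
    (hfm : AEStronglyMeasurable f μ) (hgm : AEStronglyMeasurable g μ)
    (hf0 : ∀ x, 0 ≤ f x) (hg0 : ∀ x, 0 ≤ g x)
    (hfr : Integrable (fun x => f x ^ r) μ) (hgs : Integrable (fun x => g x ^ s) μ) :
    Integrable (fun x => f x * g x) μ ∧
    ∫ x, f x * g x ∂μ ≤ (∫ x, f x ^ r ∂μ) ^ r⁻¹ * (∫ x, g x ^ s ∂μ) ^ s⁻¹ := by
  have hr0 : (0:ℝ) < r := hrs.pos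
  have hs0 : (0:ℝ) < s := hrs.symm.pos
  have hinv : r⁻¹ + s⁻¹ = 1 := hrs.inv_add_inv_eq_one
  have hyoung : ∀ x, f x * g x ≤ f x ^ r / r + g x ^ s / s := fun x =>
    Real.young_inequality_of_nonneg (hf0 x) (hg0 x) hrs
  have hint : Integrable (fun x => f x * g x) μ := by
    refine Integrable.mono' ((hfr.div_const r).add (hgs.div_const s)) (hfm.mul hgm) ?_
    filter_upwards with x
    rw [Real.norm_of_nonneg (mul_nonneg (hf0 x) (hg0 x))]
    exact hyoung x
  refine ⟨hint, ?_⟩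
  set A := ∫ x, f x ^ r ∂μ with hAdef
  set B := ∫ x, g x ^ s ∂μ with hBdef
  have hA0 : 0 ≤ A := integral_nonneg fun x => Real.rpow_nonneg (hf0 x) r
  have hB0 : 0 ≤ B := integral_nonneg fun x => Real.rpow_nonneg (hg0 x) s
  rcases hA0.eq_or_lt with hA | hA
  · have hfz : (fun x => f x ^ r) =ᵐ[μ] 0 :=
      (integral_eq_zero_iff_of_nonneg (fun x => Real.rpow_nonneg (hf0 x) r) hfr).1 hA.symm
    have hfgz : (fun x => f x * g x) =ᵐ[μ] 0 := by
      filter_upwards [hfz] with x hx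
      have : f x = 0 := stmt6_rpow_zero_of (hf0 x) (ne_of_gt hr0) hx
      simp [this]
    rw [integral_congr_ae hfgz]
    simp only [Pi.zero_apply, integral_zero]
    exact mul_nonneg (Real.rpow_nonneg hA0 _) (Real.rpow_nonneg hB0 _)
  rcases hB0.eq_or_lt with hB | hB
  · have hgz : (fun x => g x ^ s) =ᵐ[μ] 0 :=
      (integral_eq_zero_iff_of_nonneg (fun x => Real.rpow_nonneg (hg0 x) s) hgs).1 hB.symm
    have hfgz : (fun x => f x * g x) =ᵐ[μ] 0 := by
      filter_upwards [hgz] with x hx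
      have : g x = 0 := stmt6_rpow_zero_of (hg0 x) (ne_of_gt hs0) hx
      simp [this]
    rw [integral_congr_ae hfgz]
    simp only [Pi.zero_apply, integral_zero]
    exact mul_nonneg (Real.rpow_nonneg hA0 _) (Real.rpow_nonneg hB0 _)
  · set c := A ^ r⁻¹ with hcdef
    set d := B ^ s⁻¹ with hddef
    have hc : 0 < c := Real.rpow_pos_of_pos hA _
    have hd : 0 < d := Real.rpow_pos_of_pos hB _
    have hcr : c ^ r = A := Real.rpow_inv_rpow hA0 (ne_of_gt hr0)
    have hds : d ^ s = B := Real.rpow_inv_rpow hB0 (ne_of_gt hs0)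
    have pw : ∀ x, f x * g x ≤ c * d * (f x ^ r / (A * r) + g x ^ s / (B * s)) := by
      intro x
      have hy := Real.young_inequality_of_nonneg
        (div_nonneg (hf0 x) hc.le) (div_nonneg (hg0 x) hd.le) hrs
      rw [Real.div_rpow (hf0 x) hc.le, Real.div_rpow (hg0 x) hd.le, hcr, hds] at hy
      have := mul_le_mul_of_nonneg_left hy (mul_nonneg hc.le hd.le)
      calc f x * g x = c * d * (f x / c * (g x / d)) := by field_simp
        _ ≤ c * d * (f x ^ r / A / r + g x ^ s / B / s) := this
        _ = c * d * (f x ^ r / (A * r) + g x ^ s / (B * s)) := by rw [div_div, div_div]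
    have hbound : Integrable (fun x => c * d * (f x ^ r / (A * r) + g x ^ s / (B * s))) μ :=
      ((hfr.div_const (A * r)).add (hgs.div_const (B * s))).const_mul (c * d)
    have hle := integral_mono hint hbound pw
    have hRHS : ∫ x, c * d * (f x ^ r / (A * r) + g x ^ s / (B * s)) ∂μ = c * d := by
      rw [integral_const_mul, integral_add (hfr.div_const _) (hgs.div_const _),
        integral_div, integral_div, ← hAdef, ← hBdef]
      have h1 : A / (A * r) = r⁻¹ := by rw [div_mul_eq_div_div, div_self (ne_of_gt hA), one_div]
      have h2 : B / (B * s) = s⁻¹ := by rw [div_mul_eq_div_div, div_self (ne_of_gt hB), one_div]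
      rw [h1, h2, hinv, mul_one]
    rw [hRHS] at hle
    exact hle

/-- equality case of Hölder's inequality -/
lemma stmt6_holder_eq {r s : ℝ} (hrs : r.HolderConjugate s) (f g : α → ℝ)
    (hfm : AEStronglyMeasurable f μ) (hgm : AEStronglyMeasurable g μ)
    (hf0 : ∀ x, 0 ≤ f x) (hg0 : ∀ x, 0 ≤ g x)
    (hfr : Integrable (fun x => f x ^ r) μ) (hgs : Integrable (fun x => g x ^ s) μ)
    (hA : 0 < ∫ x, f x ^ r ∂μ) (hB : 0 < ∫ x, g x ^ s ∂μ)
    (heq : ∫ x, f x * g x ∂μ = (∫ x, f x ^ r ∂μ) ^ r⁻¹ * (∫ x, g x ^ s ∂μ) ^ s⁻¹) :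
    ∀ᵐ x ∂μ, f x ^ r * (∫ x, g x ^ s ∂μ) = g x ^ s * (∫ x, f x ^ r ∂μ) := by
  have hr0 : (0:ℝ) < r := hrs.pos
  have hs0 : (0:ℝ) < s := hrs.symm.pos
  obtain ⟨hint, -⟩ := stmt6_holder hrs f g hfm hgm hf0 hg0 hfr hgs
  set A := ∫ x, f x ^ r ∂μ with hAdef
  set B := ∫ x, g x ^ s ∂μ with hBdef
  set c := A ^ r⁻¹ with hcdef
  set d := B ^ s⁻¹ with hddef
  have hc : 0 < c := Real.rpow_pos_of_pos hA _
  have hd : 0 < d := Real.rpow_pos_of_pos hB _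
  have hcr : c ^ r = A := Real.rpow_inv_rpow hA.le (ne_of_gt hr0)
  have hds : d ^ s = B := Real.rpow_inv_rpow hB.le (ne_of_gt hs0)
  have pw : ∀ x, f x * g x ≤ c * d * (f x ^ r / (A * r) + g x ^ s / (B * s)) := by
    intro x
    have hy := Real.young_inequality_of_nonneg
      (div_nonneg (hf0 x) hc.le) (div_nonneg (hg0 x) hd.le) hrs
    rw [Real.div_rpow (hf0 x) hc.le, Real.div_rpow (hg0 x) hd.le, hcr, hds] at hy
    have := mul_le_mul_of_nonneg_left hy (mul_nonneg hc.le hd.le)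
    calc f x * g x = c * d * (f x / c * (g x / d)) := by field_simp
      _ ≤ c * d * (f x ^ r / A / r + g x ^ s / B / s) := this
      _ = c * d * (f x ^ r / (A * r) + g x ^ s / (B * s)) := by rw [div_div, div_div]
  have hbound : Integrable (fun x => c * d * (f x ^ r / (A * r) + g x ^ s / (B * s))) μ :=
    ((hfr.div_const (A * r)).add (hgs.div_const (B * s))).const_mul (c * d)
  have hDint : Integrable
      (fun x => c * d * (f x ^ r / (A * r) + g x ^ s / (B * s)) - f x * g x) μ :=
    hbound.sub hint
  have hRHS : ∫ x, c * d * (f x ^ r / (A * r) + g x ^ s / (B * s)) ∂μ = c * d := by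
    rw [integral_const_mul, integral_add (hfr.div_const _) (hgs.div_const _),
      integral_div, integral_div, ← hAdef, ← hBdef]
    have h1 : A / (A * r) = r⁻¹ := by rw [div_mul_eq_div_div, div_self (ne_of_gt hA), one_div]
    have h2 : B / (B * s) = s⁻¹ := by rw [div_mul_eq_div_div, div_self (ne_of_gt hB), one_div]
    rw [h1, h2, hrs.inv_add_inv_eq_one, mul_one]
  have hDzero : ∫ x, (c * d * (f x ^ r / (A * r) + g x ^ s / (B * s)) - f x * g x) ∂μ = 0 := by
    rw [integral_sub hbound hint, hRHS, heq]
    ring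
  have hae : (fun x => c * d * (f x ^ r / (A * r) + g x ^ s / (B * s)) - f x * g x) =ᵐ[μ] 0 :=
    (integral_eq_zero_iff_of_nonneg (fun x => sub_nonneg.2 (pw x)) hDint).1 hDzero
  filter_upwards [hae] with x hx
  have hxeq : f x * g x = c * d * (f x ^ r / (A * r) + g x ^ s / (B * s)) := by
    have := sub_eq_zero.1 hx
    linarith [this]
  -- apply Young equality case to a = f x / c, b = g x / d
  have hyeq : (f x / c) * (g x / d) = (f x / c) ^ r / r + (g x / d) ^ s / s := by
    rw [Real.div_rpow (hf0 x) hc.le, Real.div_rpow (hg0 x) hd.le, hcr, hds]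
    have hcd : c * d ≠ 0 := by positivity
    field_simp
    field_simp at hxeq
    nlinarith [hxeq]
  have := stmt6_young_eq hrs (div_nonneg (hf0 x) hc.le) (div_nonneg (hg0 x) hd.le) hyeq
  rw [Real.div_rpow (hf0 x) hc.le, Real.div_rpow (hg0 x) hd.le, hcr, hds] at this
  have hfr' : f x ^ r = g x ^ s / B * A := by
    field_simp at this ⊢
    nlinarith [this]
  rw [hfr']
  field_simp

/-- ℓ^e bound on sums -/
lemma stmt6_sum_rpow_le {k : ℕ} (hk : 0 < k) {e : ℝ} (he : 0 ≤ e) (a : Fin k → ℝ)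
    (ha : ∀ i, 0 ≤ a i) : (∑ i, a i) ^ e ≤ (k:ℝ) ^ e * ∑ i, a i ^ e := by
  haveI : Nonempty (Fin k) := ⟨⟨0, hk⟩⟩
  obtain ⟨j, -, hj⟩ := Finset.exists_max_image Finset.univ a ⟨Classical.arbitrary _,
    Finset.mem_univ _⟩
  have h1 : ∑ i, a i ≤ (k:ℝ) * a j := by
    calc ∑ i, a i ≤ ∑ _i : Fin k, a j :=
          Finset.sum_le_sum (fun i _ => hj i (Finset.mem_univ i))
      _ = (k:ℝ) * a j := by
          simp [Finset.sum_const, nsmul_eq_mul, Finset.card_univ]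
  calc (∑ i, a i) ^ e ≤ ((k:ℝ) * a j) ^ e :=
        Real.rpow_le_rpow (Finset.sum_nonneg fun i _ => ha i) h1 he
    _ = (k:ℝ) ^ e * a j ^ e := Real.mul_rpow (by positivity) (ha j)
    _ ≤ (k:ℝ) ^ e * ∑ i, a i ^ e := by
        refine mul_le_mul_of_nonneg_left ?_ (by positivity)
        exact Finset.single_le_sum (fun i _ => Real.rpow_nonneg (ha i) e) (Finset.mem_univ j)

/-- parallelogram law in the dual of a real Hilbert space -/
lemma stmt6_parallelogram {E' : Type*} [NormedAddCommGroup E'] [InnerProductSpace ℝ E']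
    [CompleteSpace E'] (φ ψ : E' →L[ℝ] ℝ) :
    ‖φ + ψ‖ ^ 2 + ‖φ - ψ‖ ^ 2 = 2 * (‖φ‖ ^ 2 + ‖ψ‖ ^ 2) := by
  let e := (InnerProductSpace.toDual ℝ E').symm
  have h1 : ‖φ + ψ‖ = ‖e φ + e ψ‖ := by
    rw [← map_add]
    exact (LinearIsometryEquiv.norm_map _ _).symm
  have h2 : ‖φ - ψ‖ = ‖e φ - e ψ‖ := by
    rw [← map_sub]
    exact (LinearIsometryEquiv.norm_map _ _).symm
  have h3 : ‖φ‖ = ‖e φ‖ := (LinearIsometryEquiv.norm_map _ _).symm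
  have h4 : ‖ψ‖ = ‖e ψ‖ := (LinearIsometryEquiv.norm_map _ _).symm
  have h := parallelogram_law_with_norm ℝ (e φ) (e ψ)
  rw [h1, h2, h3, h4, pow_two, pow_two, pow_two, pow_two]
  linarith

open MeasureTheory

set_option maxHeartbeats 2000000 in
/-- Characterization of extremal maps for the sharp vector Euclidean Sobolev
inequality: any nonzero extremal map `U` is of the form `U = t u` with
`t ∈ S^{k-1}`, `F t = M_F`, and `u` a scalar Sobolev extremal function. -/
theorem stmt6 (n k : ℕ) (hn : 3 ≤ n) (hk : 1 ≤ k)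
    (p : ℝ) (hp : p = 2 * (n : ℝ) / ((n : ℝ) - 2))
    (A0 : ℝ)
    (hScalar : ∀ u : EuclideanSpace ℝ (Fin n) → ℝ, Differentiable ℝ u →
      Integrable (fun x => |u x| ^ p) →
      Integrable (fun x => ‖fderiv ℝ u x‖ ^ 2) →
      (∫ x, |u x| ^ p) ^ (2 / p) ≤ A0 * ∫ x, ‖fderiv ℝ u x‖ ^ 2)
    (F : EuclideanSpace ℝ (Fin k) → ℝ)
    (hFcont : Continuous F)
    (hFpos : ∀ t, t ≠ 0 → 0 < F t)
    (hFhom : ∀ l : ℝ, 0 < l → ∀ t, F (l • t) = l ^ p * F t)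
    (MF : ℝ) (hMF : IsGreatest (F '' {t | ‖t‖ = 1}) MF)
    (U : Fin k → EuclideanSpace ℝ (Fin n) → ℝ)
    (hUdiff : ∀ i, Differentiable ℝ (U i))
    (hUint : ∀ i, Integrable (fun x => |U i x| ^ p) ∧
      Integrable (fun x => ‖fderiv ℝ (U i) x‖ ^ 2))
    (hUne : ∃ i, U i ≠ 0)
    (hext : (∫ x, F (WithLp.toLp 2 (fun i => U i x))) ^ (2 / p) =
      MF ^ (2 / p) * A0 * ∑ i, ∫ x, ‖fderiv ℝ (U i) x‖ ^ 2) :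
    ∃ t : EuclideanSpace ℝ (Fin k), ‖t‖ = 1 ∧ F t = MF ∧
      ∃ u : EuclideanSpace ℝ (Fin n) → ℝ, u ≠ 0 ∧
        (∫ x, |u x| ^ p) ^ (2 / p) = A0 * ∫ x, ‖fderiv ℝ u x‖ ^ 2 ∧
        ∀ i x, U i x = t i * u x := by
  classical
  -- numerics
  have hn3 : (3:ℝ) ≤ (n:ℝ) := by exact_mod_cast hn
  have hn2 : (0:ℝ) < (n:ℝ) - 2 := by linarith
  have hp2 : 2 < p := by
    rw [hp, lt_div_iff₀ hn2]; nlinarith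
  have hp0 : 0 < p := by linarith
  have hp0' : p ≠ 0 := ne_of_gt hp0
  have hp2' : p - 2 ≠ 0 := ne_of_gt (by linarith)
  set r : ℝ := p / 2 with hrdef
  set cs : ℝ := p / (p - 2) with hcsdef
  have hr1 : 1 < r := by rw [hrdef]; linarith
  have hr0 : (0:ℝ) < r := by linarith
  have hrne : r ≠ 0 := ne_of_gt hr0
  have hrs : r.HolderConjugate cs := by
    rw [Real.holderConjugate_iff]
    refine ⟨hr1, ?_⟩
    rw [hrdef, hcsdef, inv_div, inv_div, ← add_div]
    field_simp
    ring
  have hcs0 : (0:ℝ) < cs := hrs.symm.pos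
  have h2p : 2 / p = r⁻¹ := by rw [hrdef, inv_div]
  have hinvr0 : (0:ℝ) < r⁻¹ := by positivity
  have hinvr1 : r⁻¹ < 1 := inv_lt_one_of_one_lt₀ hr1
  rw [h2p] at hext hScalar ⊢
  -- powers
  have hpow2 : ∀ c : ℝ, 0 ≤ c → (c ^ 2) ^ r = c ^ p := by
    intro c hc
    rw [← Real.rpow_natCast c 2, ← Real.rpow_mul hc]
    congr 1
    rw [hrdef]; push_cast; ring
  have habs : ∀ a : ℝ, ((a : ℝ) ^ 2) ^ r = |a| ^ p := by
    intro a; rw [← sq_abs]; exact hpow2 _ (abs_nonneg a)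
  -- basic continuity and nonnegativity
  have hUcont : ∀ i, Continuous (U i) := fun i => (hUdiff i).continuous
  set S : EuclideanSpace ℝ (Fin n) → ℝ := fun x => ∑ i, (U i x) ^ 2 with hSdef
  have hS0 : ∀ x, 0 ≤ S x := fun x => Finset.sum_nonneg fun i _ => sq_nonneg _
  have hScont : Continuous S := by
    apply continuous_finset_sum
    exact fun i _ => (hUcont i).pow 2
  have hSrcont : Continuous (fun x => S x ^ r) :=
    hScont.rpow_const (fun x => Or.inr hr0.le)
  have hk' : 0 < k := hk
  -- integrability of S^r
  have hPint : ∀ i, Integrable (fun x => |U i x| ^ p) := fun i => (hUint i).1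
  have hTint : Integrable (fun x => S x ^ r) := by
    have hbound : Integrable (fun x => (k:ℝ) ^ r * ∑ i, |U i x| ^ p) :=
      (integrable_finset_sum _ (fun i _ => hPint i)).const_mul _
    refine Integrable.mono' hbound hSrcont.aestronglyMeasurable ?_
    filter_upwards with x
    rw [Real.norm_of_nonneg (Real.rpow_nonneg (hS0 x) r)]
    calc S x ^ r ≤ (k:ℝ) ^ r * ∑ i, ((U i x) ^ 2) ^ r :=
          stmt6_sum_rpow_le hk' hr0.le _ (fun i => sq_nonneg _)
      _ = (k:ℝ) ^ r * ∑ i, |U i x| ^ p := by simp only [habs]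
  -- F bounds
  obtain ⟨t1, ht1, ht1F⟩ := hMF.1
  have ht1' : ‖t1‖ = 1 := ht1
  have ht1ne : t1 ≠ 0 := by
    intro h; rw [h, norm_zero] at ht1'; norm_num at ht1'
  have hMFpos : 0 < MF := ht1F ▸ hFpos t1 ht1ne
  have hF0 : F (0 : EuclideanSpace ℝ (Fin k)) = 0 := by
    have h2 := hFhom 2 (by norm_num) 0
    rw [smul_zero] at h2
    have h2ge : (2:ℝ) ≤ (2:ℝ) ^ p := by
      calc (2:ℝ) = 2 ^ (1:ℝ) := (Real.rpow_one 2).symm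
        _ ≤ 2 ^ p := Real.rpow_le_rpow_of_exponent_le (by norm_num) (by linarith)
    nlinarith [h2, h2ge]
  have hFnonneg : ∀ y : EuclideanSpace ℝ (Fin k), 0 ≤ F y := by
    intro y
    rcases eq_or_ne y 0 with rfl | hy
    · rw [hF0]
    · exact (hFpos y hy).le
  have hnormsq : ∀ y : EuclideanSpace ℝ (Fin k), ‖y‖ ^ 2 = ∑ i, (y i) ^ 2 := by
    intro y
    rw [EuclideanSpace.norm_eq, Real.sq_sqrt (by positivity)]
    simp [Real.norm_eq_abs, sq_abs]
  have hunit : ∀ y : EuclideanSpace ℝ (Fin k), y ≠ 0 → ‖(‖y‖⁻¹ • y)‖ = 1 := by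
    intro y hy
    have hny : 0 < ‖y‖ := norm_pos_iff.2 hy
    rw [norm_smul, norm_inv, norm_norm, inv_mul_cancel₀ (ne_of_gt hny)]
  have hFscale : ∀ y : EuclideanSpace ℝ (Fin k), y ≠ 0 → F y = ‖y‖ ^ p * F (‖y‖⁻¹ • y) := by
    intro y hy
    have hny : 0 < ‖y‖ := norm_pos_iff.2 hy
    have h := hFhom ‖y‖ hny (‖y‖⁻¹ • y)
    rwa [smul_smul, mul_inv_cancel₀ (ne_of_gt hny), one_smul] at h
  have hsum_norm : ∀ y : EuclideanSpace ℝ (Fin k), (∑ i, (y i) ^ 2) ^ r = ‖y‖ ^ p := by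
    intro y
    rw [← hnormsq]; exact hpow2 _ (norm_nonneg y)
  have hFle : ∀ y : EuclideanSpace ℝ (Fin k), F y ≤ MF * (∑ i, (y i) ^ 2) ^ r := by
    intro y
    rcases eq_or_ne y 0 with rfl | hy
    · rw [hF0, hsum_norm, norm_zero, Real.zero_rpow hp0']
      simp
    · rw [hsum_norm, hFscale y hy]
      have h2 : F (‖y‖⁻¹ • y) ≤ MF := hMF.2 ⟨_, hunit y hy, rfl⟩
      have h3 : (0:ℝ) ≤ ‖y‖ ^ p := Real.rpow_nonneg (norm_nonneg y) p
      nlinarith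
  -- min of F on sphere
  have hsph_eq : {t : EuclideanSpace ℝ (Fin k) | ‖t‖ = 1} =
      Metric.sphere (0 : EuclideanSpace ℝ (Fin k)) 1 := by
    ext y; simp [dist_zero_right]
  have hsph : IsCompact {t : EuclideanSpace ℝ (Fin k) | ‖t‖ = 1} := by
    rw [hsph_eq]; exact isCompact_sphere 0 1
  obtain ⟨w0, hw0mem, hw0min⟩ := hsph.exists_isMinOn ⟨t1, ht1'⟩ hFcont.continuousOn
  have hw0ne : w0 ≠ 0 := by
    intro h
    have : ‖w0‖ = 1 := hw0mem
    rw [h, norm_zero] at this; norm_num at this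
  have hmFpos : 0 < F w0 := hFpos w0 hw0ne
  have hFge : ∀ y : EuclideanSpace ℝ (Fin k), F w0 * (∑ i, (y i) ^ 2) ^ r ≤ F y := by
    intro y
    rcases eq_or_ne y 0 with rfl | hy
    · rw [hF0, hsum_norm, norm_zero, Real.zero_rpow hp0']
      simp
    · rw [hsum_norm, hFscale y hy]
      have h2 : F w0 ≤ F (‖y‖⁻¹ • y) := isMinOn_iff.1 hw0min _ (hunit y hy)
      have h3 : (0:ℝ) ≤ ‖y‖ ^ p := Real.rpow_nonneg (norm_nonneg y) p
      nlinarith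
  -- integrability of F ∘ U and the two-sided comparison
  have hUveccont : Continuous (fun x => WithLp.toLp 2 (fun i => U i x : Fin k → ℝ)) := by
    have h1 : Continuous (fun x => (fun i => U i x : Fin k → ℝ)) :=
      continuous_pi fun i => hUcont i
    exact (PiLp.continuous_toLp 2 _).comp h1
  have hFUcont : Continuous (fun x => F (WithLp.toLp 2 (fun i => U i x))) := hFcont.comp hUveccont
  have hGint : Integrable (fun x => F (WithLp.toLp 2 (fun i => U i x))) := by
    refine Integrable.mono' (hTint.const_mul MF) hFUcont.aestronglyMeasurable ?_
    filter_upwards with x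
    rw [Real.norm_of_nonneg (hFnonneg _)]
    exact hFle (WithLp.toLp 2 (fun i => U i x))
  have hGle : (∫ x, F (WithLp.toLp 2 (fun i => U i x))) ≤ MF * ∫ x, S x ^ r := by
    rw [← integral_const_mul]
    exact integral_mono hGint (hTint.const_mul MF) (fun x => hFle (WithLp.toLp 2 (fun i => U i x)))
  have hGge : F w0 * ∫ x, S x ^ r ≤ ∫ x, F (WithLp.toLp 2 (fun i => U i x)) := by
    rw [← integral_const_mul]
    exact integral_mono (hTint.const_mul (F w0)) hGint (fun x => hFge (WithLp.toLp 2 (fun i => U i x)))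
  -- positivity
  obtain ⟨i0, hi0⟩ := hUne
  have hPnonneg : ∀ i, 0 ≤ ∫ x, |U i x| ^ p :=
    fun i => integral_nonneg fun x => Real.rpow_nonneg (abs_nonneg _) p
  have hzero_fun : ∀ w : EuclideanSpace ℝ (Fin n) → ℝ, Continuous w →
      Integrable (fun x => |w x| ^ p) → (∫ x, |w x| ^ p) = 0 → ∀ x, w x = 0 := by
    intro w hw hwint h0
    have hae := (integral_eq_zero_iff_of_nonneg
      (fun x => Real.rpow_nonneg (abs_nonneg _) p) hwint).1 h0
    have hcontabs : Continuous (fun x => |w x| ^ p) :=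
      (hw.abs).rpow_const (fun x => Or.inr hp0.le)
    have heq0 : (fun x => |w x| ^ p) = (fun _ => (0:ℝ)) :=
      (Continuous.ae_eq_iff_eq volume hcontabs continuous_const).1 hae
    intro x
    have hx : |w x| ^ p = 0 := congrFun heq0 x
    have : |w x| = 0 := stmt6_rpow_zero_of (abs_nonneg _) hp0' hx
    simpa using this
  have hPzero_imp : ∀ i, (∫ x, |U i x| ^ p) = 0 → U i = 0 :=
    fun i h0 => funext (hzero_fun (U i) (hUcont i) (hPint i) h0)
  have hPi0pos : 0 < ∫ x, |U i0 x| ^ p :=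
    lt_of_le_of_ne (hPnonneg i0) (fun h => hi0 (hPzero_imp i0 h.symm))
  have hPleT : ∀ i, (∫ x, |U i x| ^ p) ≤ ∫ x, S x ^ r := by
    intro i
    refine integral_mono (hPint i) hTint (fun x => ?_)
    rw [← habs]
    exact Real.rpow_le_rpow (sq_nonneg _)
      (Finset.single_le_sum (fun j _ => sq_nonneg (U j x)) (Finset.mem_univ i)) hr0.le
  have hTpos : 0 < ∫ x, S x ^ r := lt_of_lt_of_le hPi0pos (hPleT i0)
  have hGpos : 0 < ∫ x, F (WithLp.toLp 2 (fun i => U i x)) :=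
    lt_of_lt_of_le (mul_pos hmFpos hTpos) hGge
  have hEnonneg : ∀ i, 0 ≤ ∫ x, ‖fderiv ℝ (U i) x‖ ^ 2 :=
    fun i => integral_nonneg fun x => sq_nonneg _
  have hA0pos : 0 < A0 := by
    have hsc := hScalar (U i0) (hUdiff i0) (hPint i0) (hUint i0).2
    by_contra hA0
    push_neg at hA0
    have h1 : 0 < (∫ x, |U i0 x| ^ p) ^ r⁻¹ := Real.rpow_pos_of_pos hPi0pos _
    have h2 : A0 * ∫ x, ‖fderiv ℝ (U i0) x‖ ^ 2 ≤ 0 :=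
      mul_nonpos_of_nonpos_of_nonneg hA0 (hEnonneg i0)
    linarith
  -- Hölder applications
  have hSr1cont : Continuous (fun x => S x ^ (r - 1)) :=
    hScont.rpow_const (fun x => Or.inr (by linarith))
  have hhcs : ∀ x, (S x ^ (r - 1)) ^ cs = S x ^ r := by
    intro x
    rw [← Real.rpow_mul (hS0 x)]
    congr 1
    rw [hrdef, hcsdef]
    field_simp
  have hhcs_int : Integrable (fun x => (S x ^ (r - 1)) ^ cs) := by
    simp only [hhcs]; exact hTint
  have hHold : ∀ i, Integrable (fun x => (U i x) ^ 2 * S x ^ (r - 1)) ∧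
      ∫ x, (U i x) ^ 2 * S x ^ (r - 1) ≤
        (∫ x, |U i x| ^ p) ^ r⁻¹ * (∫ x, S x ^ r) ^ cs⁻¹ := by
    intro i
    have hfrint : Integrable (fun x => ((U i x) ^ 2) ^ r) := by
      simp only [habs]; exact hPint i
    have h := stmt6_holder hrs (fun x => (U i x) ^ 2) (fun x => S x ^ (r - 1))
      ((hUcont i).pow 2).aestronglyMeasurable hSr1cont.aestronglyMeasurable
      (fun x => sq_nonneg _) (fun x => Real.rpow_nonneg (hS0 x) _) hfrint hhcs_int
    rcases h with ⟨h1, h2⟩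
    refine ⟨h1, ?_⟩
    simpa only [habs, hhcs] using h2
  have hSsplit : ∀ x, S x * S x ^ (r - 1) = S x ^ r := by
    intro x
    rcases (hS0 x).eq_or_lt with h0 | h0
    · rw [← h0, Real.zero_rpow hrne, zero_mul]
    · exact (stmt6_rpow_split h0).symm
  have hsumT : ∑ i, ∫ x, (U i x) ^ 2 * S x ^ (r - 1) = ∫ x, S x ^ r := by
    rw [← integral_finset_sum _ (fun i _ => (hHold i).1)]
    congr 1
    funext x
    rw [← Finset.sum_mul]
    exact hSsplit x
  -- Minkowski inequality
  have hTsplit : (∫ x, S x ^ r) = (∫ x, S x ^ r) ^ r⁻¹ * (∫ x, S x ^ r) ^ cs⁻¹ := by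
    rw [← Real.rpow_add hTpos, hrs.inv_add_inv_eq_one, Real.rpow_one]
  have hTcs_pos : 0 < (∫ x, S x ^ r) ^ cs⁻¹ := Real.rpow_pos_of_pos hTpos _
  have hMink : (∫ x, S x ^ r) ^ r⁻¹ ≤ ∑ i, (∫ x, |U i x| ^ p) ^ r⁻¹ := by
    have h1 : (∫ x, S x ^ r) ≤ (∑ i, (∫ x, |U i x| ^ p) ^ r⁻¹) * (∫ x, S x ^ r) ^ cs⁻¹ := by
      calc (∫ x, S x ^ r) = ∑ i, ∫ x, (U i x) ^ 2 * S x ^ (r - 1) := hsumT.symm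
        _ ≤ ∑ i, (∫ x, |U i x| ^ p) ^ r⁻¹ * (∫ x, S x ^ r) ^ cs⁻¹ :=
            Finset.sum_le_sum fun i _ => (hHold i).2
        _ = (∑ i, (∫ x, |U i x| ^ p) ^ r⁻¹) * (∫ x, S x ^ r) ^ cs⁻¹ := by
            rw [Finset.sum_mul]
    refine le_of_mul_le_mul_right ?_ hTcs_pos
    rw [← hTsplit]
    exact h1
  -- the grand chain of (in)equalities
  have hMFr : (0:ℝ) < MF ^ r⁻¹ := Real.rpow_pos_of_pos hMFpos _
  have hchain1 : (∫ x, F (WithLp.toLp 2 (fun i => U i x))) ^ r⁻¹ ≤ MF ^ r⁻¹ * (∫ x, S x ^ r) ^ r⁻¹ := by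
    rw [← Real.mul_rpow hMFpos.le hTpos.le]
    exact Real.rpow_le_rpow hGpos.le hGle hinvr0.le
  have hchain2 : MF ^ r⁻¹ * (∫ x, S x ^ r) ^ r⁻¹ ≤
      MF ^ r⁻¹ * ∑ i, (∫ x, |U i x| ^ p) ^ r⁻¹ :=
    mul_le_mul_of_nonneg_left hMink hMFr.le
  have hscal : ∀ i, (∫ x, |U i x| ^ p) ^ r⁻¹ ≤ A0 * ∫ x, ‖fderiv ℝ (U i) x‖ ^ 2 :=
    fun i => hScalar (U i) (hUdiff i) (hPint i) (hUint i).2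
  have hchain3 : (∑ i, (∫ x, |U i x| ^ p) ^ r⁻¹) ≤
      A0 * ∑ i, ∫ x, ‖fderiv ℝ (U i) x‖ ^ 2 := by
    rw [Finset.mul_sum]
    exact Finset.sum_le_sum fun i _ => hscal i
  have hchain4 : MF ^ r⁻¹ * ∑ i, (∫ x, |U i x| ^ p) ^ r⁻¹ ≤
      MF ^ r⁻¹ * (A0 * ∑ i, ∫ x, ‖fderiv ℝ (U i) x‖ ^ 2) :=
    mul_le_mul_of_nonneg_left hchain3 hMFr.le
  have hext' : (∫ x, F (WithLp.toLp 2 (fun i => U i x))) ^ r⁻¹ =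
      MF ^ r⁻¹ * (A0 * ∑ i, ∫ x, ‖fderiv ℝ (U i) x‖ ^ 2) := by
    rw [hext]; ring
  -- equalities
  have heqA : (∫ x, F (WithLp.toLp 2 (fun i => U i x))) ^ r⁻¹ = MF ^ r⁻¹ * (∫ x, S x ^ r) ^ r⁻¹ := by
    linarith
  have heqB : (∫ x, S x ^ r) ^ r⁻¹ = ∑ i, (∫ x, |U i x| ^ p) ^ r⁻¹ :=
    mul_left_cancel₀ (ne_of_gt hMFr) (by linarith)
  have heqC : (∑ i, (∫ x, |U i x| ^ p) ^ r⁻¹) = A0 * ∑ i, ∫ x, ‖fderiv ℝ (U i) x‖ ^ 2 :=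
    mul_left_cancel₀ (ne_of_gt hMFr) (by linarith)
  have heqG : (∫ x, F (WithLp.toLp 2 (fun i => U i x))) = MF * ∫ x, S x ^ r := by
    have h1 : ((∫ x, F (WithLp.toLp 2 (fun i => U i x))) ^ r⁻¹) ^ (r⁻¹)⁻¹ =
        ((MF * ∫ x, S x ^ r) ^ r⁻¹) ^ (r⁻¹)⁻¹ := by
      rw [heqA, Real.mul_rpow hMFpos.le hTpos.le]
    rwa [Real.rpow_rpow_inv hGpos.le (ne_of_gt hinvr0),
      Real.rpow_rpow_inv (mul_pos hMFpos hTpos).le (ne_of_gt hinvr0)] at h1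
  -- each scalar inequality is an equality
  have hscalEq : ∀ i, (∫ x, |U i x| ^ p) ^ r⁻¹ = A0 * ∫ x, ‖fderiv ℝ (U i) x‖ ^ 2 := by
    have := (Finset.sum_eq_sum_iff_of_le (fun i (_ : i ∈ Finset.univ) => hscal i)).1
      (by rw [heqC, Finset.mul_sum])
    exact fun i => this i (Finset.mem_univ i)
  -- each Hölder inequality is an equality
  have hHoldEq : ∀ i, ∫ x, (U i x) ^ 2 * S x ^ (r - 1) =
      (∫ x, |U i x| ^ p) ^ r⁻¹ * (∫ x, S x ^ r) ^ cs⁻¹ := by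
    have hsum2 : ∑ i, ∫ x, (U i x) ^ 2 * S x ^ (r - 1) =
        ∑ i, (∫ x, |U i x| ^ p) ^ r⁻¹ * (∫ x, S x ^ r) ^ cs⁻¹ := by
      rw [hsumT, ← Finset.sum_mul, ← heqB, ← hTsplit]
    have := (Finset.sum_eq_sum_iff_of_le
      (fun i (_ : i ∈ Finset.univ) => (hHold i).2)).1 hsum2
    exact fun i => this i (Finset.mem_univ i)
  -- pointwise equality in the F-bound
  have hFptwise : ∀ x, F (WithLp.toLp 2 (fun i => U i x)) = MF * S x ^ r := by
    have hDint : Integrable (fun x => MF * S x ^ r - F (WithLp.toLp 2 (fun i => U i x))) :=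
      (hTint.const_mul MF).sub hGint
    have hDzero : ∫ x, (MF * S x ^ r - F (WithLp.toLp 2 (fun i => U i x))) = 0 := by
      rw [integral_sub (hTint.const_mul MF) hGint, integral_const_mul, heqG]; ring
    have hae := (integral_eq_zero_iff_of_nonneg
      (fun x => sub_nonneg.2 (hFle (WithLp.toLp 2 (fun i => U i x)))) hDint).1 hDzero
    have hcontD : Continuous (fun x => MF * S x ^ r - F (WithLp.toLp 2 (fun i => U i x))) :=
      (continuous_const.mul hSrcont).sub hFUcont
    have heq0 := (Continuous.ae_eq_iff_eq volume hcontD continuous_const).1 hae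
    intro x
    have hx := congrFun heq0 x
    simp only [Pi.zero_apply] at hx
    linarith [sub_eq_zero.1 hx]
  -- componentwise proportionality of squares
  set lam : Fin k → ℝ :=
    fun i => ((∫ x', |U i x'| ^ p) / (∫ x', S x' ^ r)) ^ r⁻¹ with hlamdef
  have hlam_nonneg : ∀ i, 0 ≤ lam i :=
    fun i => Real.rpow_nonneg (div_nonneg (hPnonneg i) hTpos.le) _
  have hUisq : ∀ i x, (U i x) ^ 2 = lam i * S x := by
    intro i
    rcases (hPnonneg i).eq_or_lt with hPi | hPi
    · have hUi0 : U i = 0 := hPzero_imp i hPi.symm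
      intro x
      have hlam0 : lam i = 0 := by
        rw [hlamdef]
        simp only [← hPi, zero_div]
        exact Real.zero_rpow (ne_of_gt hinvr0)
      rw [hlam0, hUi0, zero_mul]
      simp
    · have hfrint : Integrable (fun x => ((U i x) ^ 2) ^ r) := by
        simp only [habs]; exact hPint i
      have hfrP : (∫ x, ((U i x) ^ 2) ^ r) = ∫ x, |U i x| ^ p := by simp only [habs]
      have hgT : (∫ x, (S x ^ (r - 1)) ^ cs) = ∫ x, S x ^ r := by simp only [hhcs]
      have hae := stmt6_holder_eq hrs (fun x => (U i x) ^ 2) (fun x => S x ^ (r - 1))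
        ((hUcont i).pow 2).aestronglyMeasurable hSr1cont.aestronglyMeasurable
        (fun x => sq_nonneg _) (fun x => Real.rpow_nonneg (hS0 x) _) hfrint hhcs_int
        (by rw [hfrP]; exact hPi) (by rw [hgT]; exact hTpos)
        (by rw [hfrP, hgT]; exact hHoldEq i)
      have hae' : ∀ᵐ x, |U i x| ^ p * (∫ x', S x' ^ r) = S x ^ r * (∫ x', |U i x'| ^ p) := by
        filter_upwards [hae] with x hx
        rw [habs, hhcs] at hx
        simp only [habs, hhcs] at hx
        exact hx
      have hcont1 : Continuous (fun x => |U i x| ^ p * (∫ x', S x' ^ r)) :=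
        (((hUcont i).abs).rpow_const (fun x => Or.inr hp0.le)).mul continuous_const
      have hcont2 : Continuous (fun x => S x ^ r * (∫ x', |U i x'| ^ p)) :=
        hSrcont.mul continuous_const
      have heqAll := (Continuous.ae_eq_iff_eq volume hcont1 hcont2).1 hae'
      intro x
      have hx := congrFun heqAll x
      have hPT : |U i x| ^ p = ((∫ x', |U i x'| ^ p) / (∫ x', S x' ^ r)) * S x ^ r := by
        rw [div_mul_eq_mul_div, eq_div_iff (ne_of_gt hTpos)]
        linear_combination hx
      calc (U i x) ^ 2 = (((U i x) ^ 2) ^ r) ^ r⁻¹ :=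
            (Real.rpow_rpow_inv (sq_nonneg _) hrne).symm
        _ = (|U i x| ^ p) ^ r⁻¹ := by rw [habs]
        _ = (((∫ x', |U i x'| ^ p) / (∫ x', S x' ^ r)) * S x ^ r) ^ r⁻¹ := by rw [hPT]
        _ = ((∫ x', |U i x'| ^ p) / (∫ x', S x' ^ r)) ^ r⁻¹ * (S x ^ r) ^ r⁻¹ :=
            Real.mul_rpow (div_nonneg (hPnonneg i) hTpos.le) (Real.rpow_nonneg (hS0 x) r)
        _ = lam i * S x := by rw [Real.rpow_rpow_inv (hS0 x) hrne, hlamdef]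
  -- the sign step: each component is a constant multiple of U i0
  have hlami0 : 0 < lam i0 := by
    rw [hlamdef]
    exact Real.rpow_pos_of_pos (div_pos hPi0pos hTpos) _
  have hUc : ∀ i x, (U i x) ^ 2 = (lam i / lam i0) * (U i0 x) ^ 2 := by
    intro i x
    rw [hUisq i x, hUisq i0 x]
    field_simp
  have hsign : ∀ i, ∃ di : ℝ, ∀ x, U i x = di * U i0 x := by
    intro i
    rcases (hlam_nonneg i).eq_or_lt with hlz | hlz
    · refine ⟨0, fun x => ?_⟩
      have h1 := hUisq i x
      rw [← hlz, zero_mul] at h1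
      rw [zero_mul]
      exact sq_eq_zero_iff.1 h1
    · set ci : ℝ := Real.sqrt (lam i / lam i0) with hcidef
      have hci : 0 < ci := Real.sqrt_pos.2 (div_pos hlz hlami0)
      have hci2 : ci ^ 2 = lam i / lam i0 := Real.sq_sqrt (div_nonneg hlz.le hlami0.le)
      have hUci : ∀ x, (U i x) ^ 2 = ci ^ 2 * (U i0 x) ^ 2 := by
        intro x; rw [hci2]; exact hUc i x
      set a : EuclideanSpace ℝ (Fin n) → ℝ :=
        fun x => (2:ℝ)⁻¹ * (U i x + ci * U i0 x) with hadef
      set b : EuclideanSpace ℝ (Fin n) → ℝ :=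
        fun x => (2:ℝ)⁻¹ * (U i x - ci * U i0 x) with hbdef
      have hcase : ∀ x, (U i x = ci * U i0 x ∧ b x = 0 ∧ a x = U i x) ∨
          (U i x = -(ci * U i0 x) ∧ a x = 0 ∧ b x = U i x) := by
        intro x
        have hfac : (U i x - ci * U i0 x) * (U i x + ci * U i0 x) = 0 := by
          linear_combination hUci x
        rcases mul_eq_zero.1 hfac with h | h
        · have h1 : U i x = ci * U i0 x := by linarith
          left
          refine ⟨h1, ?_, ?_⟩
          · simp only [hbdef]; rw [h1]; ring
          · simp only [hadef]; rw [h1]; ring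
        · have h1 : U i x = -(ci * U i0 x) := by linarith
          right
          refine ⟨h1, ?_, ?_⟩
          · simp only [hadef]; rw [h1]; ring
          · simp only [hbdef]; rw [h1]; ring
      have hdiff_ina : Differentiable ℝ (fun x => U i x + ci * U i0 x) :=
        (hUdiff i).add ((hUdiff i0).const_mul ci)
      have hdiff_inb : Differentiable ℝ (fun x => U i x - ci * U i0 x) :=
        (hUdiff i).sub ((hUdiff i0).const_mul ci)
      have hda : Differentiable ℝ a := by
        rw [hadef]; exact hdiff_ina.const_mul _
      have hdb : Differentiable ℝ b := by
        rw [hbdef]; exact hdiff_inb.const_mul _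
      have hPaint : Integrable (fun x => |a x| ^ p) := by
        refine Integrable.mono' (hPint i) ((hda.continuous.abs).rpow_const
          (fun x => Or.inr hp0.le)).aestronglyMeasurable ?_
        filter_upwards with x
        rw [Real.norm_of_nonneg (Real.rpow_nonneg (abs_nonneg _) p)]
        rcases hcase x with ⟨h1, hb0, ha1⟩ | ⟨h1, ha0, hb1⟩
        · rw [ha1]
        · rw [ha0, abs_zero, Real.zero_rpow hp0']
          positivity
      have hPbint : Integrable (fun x => |b x| ^ p) := by
        refine Integrable.mono' (hPint i) ((hdb.continuous.abs).rpow_const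
          (fun x => Or.inr hp0.le)).aestronglyMeasurable ?_
        filter_upwards with x
        rw [Real.norm_of_nonneg (Real.rpow_nonneg (abs_nonneg _) p)]
        rcases hcase x with ⟨h1, hb0, ha1⟩ | ⟨h1, ha0, hb1⟩
        · rw [hb0, abs_zero, Real.zero_rpow hp0']
          positivity
        · rw [hb1]
      have hfa : ∀ x, fderiv ℝ a x =
          (2:ℝ)⁻¹ • (fderiv ℝ (U i) x + ci • fderiv ℝ (U i0) x) := by
        intro x
        rw [hadef, fderiv_const_mul (hdiff_ina x) ((2:ℝ)⁻¹),
          fderiv_fun_add (hUdiff i x) (((hUdiff i0).const_mul ci) x),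
          fderiv_const_mul (hUdiff i0 x) ci]
      have hfb : ∀ x, fderiv ℝ b x =
          (2:ℝ)⁻¹ • (fderiv ℝ (U i) x - ci • fderiv ℝ (U i0) x) := by
        intro x
        rw [hbdef, fderiv_const_mul (hdiff_inb x) ((2:ℝ)⁻¹),
          fderiv_fun_sub (hUdiff i x) (((hUdiff i0).const_mul ci) x),
          fderiv_const_mul (hUdiff i0 x) ci]
      have hEab : ∀ x, ‖fderiv ℝ a x‖ ^ 2 + ‖fderiv ℝ b x‖ ^ 2 =
          (2:ℝ)⁻¹ * (‖fderiv ℝ (U i) x‖ ^ 2 + ci ^ 2 * ‖fderiv ℝ (U i0) x‖ ^ 2) := by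
        intro x
        rw [hfa x, hfb x]
        have hpar := stmt6_parallelogram (fderiv ℝ (U i) x) (ci • fderiv ℝ (U i0) x)
        have hψn : ‖ci • fderiv ℝ (U i0) x‖ ^ 2 = ci ^ 2 * ‖fderiv ℝ (U i0) x‖ ^ 2 := by
          rw [norm_smul, Real.norm_eq_abs, mul_pow, sq_abs]
        have e1 : ‖(2:ℝ)⁻¹ • (fderiv ℝ (U i) x + ci • fderiv ℝ (U i0) x)‖ ^ 2 =
            (2:ℝ)⁻¹ * (2:ℝ)⁻¹ * ‖fderiv ℝ (U i) x + ci • fderiv ℝ (U i0) x‖ ^ 2 := by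
          rw [norm_smul, Real.norm_eq_abs, abs_of_pos (by norm_num : (0:ℝ) < (2:ℝ)⁻¹)]
          ring
        have e2 : ‖(2:ℝ)⁻¹ • (fderiv ℝ (U i) x - ci • fderiv ℝ (U i0) x)‖ ^ 2 =
            (2:ℝ)⁻¹ * (2:ℝ)⁻¹ * ‖fderiv ℝ (U i) x - ci • fderiv ℝ (U i0) x‖ ^ 2 := by
          rw [norm_smul, Real.norm_eq_abs, abs_of_pos (by norm_num : (0:ℝ) < (2:ℝ)⁻¹)]
          ring
        rw [e1, e2]
        linarith [hpar, hψn]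
      have hEaint : Integrable (fun x => ‖fderiv ℝ a x‖ ^ 2) := by
        have hbound : Integrable (fun x =>
            (2:ℝ)⁻¹ * (‖fderiv ℝ (U i) x‖ ^ 2 + ci ^ 2 * ‖fderiv ℝ (U i0) x‖ ^ 2)) :=
          (((hUint i).2).add (((hUint i0).2).const_mul (ci ^ 2))).const_mul _
        refine Integrable.mono' hbound
          ((measurable_fderiv ℝ a).norm.pow measurable_const).aestronglyMeasurable ?_
        filter_upwards with x
        rw [Real.norm_of_nonneg (sq_nonneg _)]
        linarith [hEab x, sq_nonneg ‖fderiv ℝ b x‖]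
      have hEbint : Integrable (fun x => ‖fderiv ℝ b x‖ ^ 2) := by
        have hbound : Integrable (fun x =>
            (2:ℝ)⁻¹ * (‖fderiv ℝ (U i) x‖ ^ 2 + ci ^ 2 * ‖fderiv ℝ (U i0) x‖ ^ 2)) :=
          (((hUint i).2).add (((hUint i0).2).const_mul (ci ^ 2))).const_mul _
        refine Integrable.mono' hbound
          ((measurable_fderiv ℝ b).norm.pow measurable_const).aestronglyMeasurable ?_
        filter_upwards with x
        rw [Real.norm_of_nonneg (sq_nonneg _)]
        linarith [hEab x, sq_nonneg ‖fderiv ℝ a x‖]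
      have hsa := hScalar a hda hPaint hEaint
      have hsb := hScalar b hdb hPbint hEbint
      -- relation between the masses of U i and U i0
      have hUabs : ∀ x, |U i x| = ci * |U i0 x| := by
        intro x
        have h1 : ((ci * |U i0 x|) : ℝ) ^ 2 = (U i x) ^ 2 := by
          rw [mul_pow, sq_abs, ← hUci x]
        calc |U i x| = Real.sqrt ((U i x) ^ 2) := (Real.sqrt_sq_eq_abs _).symm
          _ = Real.sqrt ((ci * |U i0 x|) ^ 2) := by rw [h1]
          _ = ci * |U i0 x| := Real.sqrt_sq (by positivity)
      have hPrel : (∫ x, |U i x| ^ p) = ci ^ p * ∫ x, |U i0 x| ^ p := by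
        rw [← integral_const_mul]
        congr 1; funext x
        rw [hUabs x, Real.mul_rpow hci.le (abs_nonneg _)]
      have hErel : (∫ x, ‖fderiv ℝ (U i) x‖ ^ 2) =
          ci ^ 2 * ∫ x, ‖fderiv ℝ (U i0) x‖ ^ 2 := by
        have h3 : (ci ^ p) ^ r⁻¹ = ci ^ 2 := by
          rw [← Real.rpow_natCast ci 2, ← Real.rpow_mul hci.le]
          congr 1
          rw [hrdef]
          push_cast
          field_simp
        have h4 : (∫ x, |U i x| ^ p) ^ r⁻¹ = ci ^ 2 * (∫ x, |U i0 x| ^ p) ^ r⁻¹ := by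
          rw [hPrel, Real.mul_rpow (Real.rpow_nonneg hci.le p) (hPnonneg i0), h3]
        have h5 : A0 * (∫ x, ‖fderiv ℝ (U i) x‖ ^ 2) =
            A0 * (ci ^ 2 * ∫ x, ‖fderiv ℝ (U i0) x‖ ^ 2) := by
          rw [← hscalEq i, h4, hscalEq i0]; ring
        exact mul_left_cancel₀ (ne_of_gt hA0pos) h5
      have hPab : ∀ x, |a x| ^ p + |b x| ^ p = |U i x| ^ p := by
        intro x
        rcases hcase x with ⟨h1, hb0, ha1⟩ | ⟨h1, ha0, hb1⟩
        · rw [ha1, hb0, abs_zero, Real.zero_rpow hp0', add_zero]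
        · rw [ha0, hb1, abs_zero, Real.zero_rpow hp0', zero_add]
      have hPsum : (∫ x, |a x| ^ p) + (∫ x, |b x| ^ p) = ∫ x, |U i x| ^ p := by
        rw [← integral_add hPaint hPbint]
        congr 1; funext x; exact hPab x
      have hEsum : (∫ x, ‖fderiv ℝ a x‖ ^ 2) + (∫ x, ‖fderiv ℝ b x‖ ^ 2) =
          (2:ℝ)⁻¹ * ((∫ x, ‖fderiv ℝ (U i) x‖ ^ 2) +
            ci ^ 2 * ∫ x, ‖fderiv ℝ (U i0) x‖ ^ 2) := by
        rw [← integral_add hEaint hEbint]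
        calc (∫ x, (‖fderiv ℝ a x‖ ^ 2 + ‖fderiv ℝ b x‖ ^ 2))
            = ∫ x, (2:ℝ)⁻¹ *
                (‖fderiv ℝ (U i) x‖ ^ 2 + ci ^ 2 * ‖fderiv ℝ (U i0) x‖ ^ 2) := by
              congr 1; funext x; exact hEab x
          _ = (2:ℝ)⁻¹ * ((∫ x, ‖fderiv ℝ (U i) x‖ ^ 2) +
                ci ^ 2 * ∫ x, ‖fderiv ℝ (U i0) x‖ ^ 2) := by
              rw [integral_const_mul,
                integral_add ((hUint i).2) (((hUint i0).2).const_mul _),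
                integral_const_mul]
      have hkey : A0 * ((∫ x, ‖fderiv ℝ a x‖ ^ 2) + (∫ x, ‖fderiv ℝ b x‖ ^ 2)) =
          ((∫ x, |a x| ^ p) + (∫ x, |b x| ^ p)) ^ r⁻¹ := by
        rw [hPsum, hEsum, hscalEq i, hErel]
        ring
      have hPa0 : 0 ≤ ∫ x, |a x| ^ p :=
        integral_nonneg fun x => Real.rpow_nonneg (abs_nonneg _) p
      have hPb0 : 0 ≤ ∫ x, |b x| ^ p :=
        integral_nonneg fun x => Real.rpow_nonneg (abs_nonneg _) p
      have hzero : (∫ x, |a x| ^ p) = 0 ∨ (∫ x, |b x| ^ p) = 0 := by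
        by_contra hcon
        push_neg at hcon
        obtain ⟨hha, hhb⟩ := hcon
        have hpa : 0 < ∫ x, |a x| ^ p := lt_of_le_of_ne hPa0 (Ne.symm hha)
        have hpb : 0 < ∫ x, |b x| ^ p := lt_of_le_of_ne hPb0 (Ne.symm hhb)
        have hsup := stmt6_rpow_superadd hpa hpb hinvr0 hinvr1
        have hdist : A0 * ((∫ x, ‖fderiv ℝ a x‖ ^ 2) + (∫ x, ‖fderiv ℝ b x‖ ^ 2)) =
            A0 * (∫ x, ‖fderiv ℝ a x‖ ^ 2) + A0 * (∫ x, ‖fderiv ℝ b x‖ ^ 2) :=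
          mul_add _ _ _
        linarith [hsa, hsb, hsup, hkey, hdist]
      rcases hzero with hz | hz
      · refine ⟨-ci, fun x => ?_⟩
        have haz := hzero_fun a hda.continuous hPaint hz x
        simp only [hadef] at haz
        linear_combination 2 * haz
      · refine ⟨ci, fun x => ?_⟩
        have hbz := hzero_fun b hdb.continuous hPbint hz x
        simp only [hbdef] at hbz
        linear_combination 2 * hbz
  -- assemble the result
  choose d hd using hsign
  have hvx : ∃ x1, U i0 x1 ≠ 0 := by
    by_contra hcontra
    push_neg at hcontra
    exact hi0 (funext fun x => hcontra x)
  obtain ⟨x1, hx1⟩ := hvx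
  set D : EuclideanSpace ℝ (Fin k) := (WithLp.equiv 2 (Fin k → ℝ)).symm (fun i => d i)
    with hDdef
  have hDapp : ∀ i, D i = d i := fun i => rfl
  have hdi0 : d i0 = 1 := by
    have h1 := hd i0 x1
    have h2 : (d i0 - 1) * U i0 x1 = 0 := by linear_combination -h1
    rcases mul_eq_zero.1 h2 with h | h
    · have := sub_eq_zero.1 h
      exact this
    · exact absurd h hx1
  have hDne : D ≠ 0 := by
    intro h
    have h0 : D i0 = 0 := by rw [h]; rfl
    rw [hDapp i0, hdi0] at h0
    norm_num at h0
  have hDnorm : 0 < ‖D‖ := norm_pos_iff.2 hDne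
  set t0 : EuclideanSpace ℝ (Fin k) := ‖D‖⁻¹ • D with ht0def
  set u0 : EuclideanSpace ℝ (Fin n) → ℝ := fun x => ‖D‖ * U i0 x with hu0def
  have ht0app : ∀ i, t0 i = ‖D‖⁻¹ * d i := by
    intro i
    rw [ht0def, PiLp.smul_apply, smul_eq_mul, hDapp i]
  have ht0norm : ‖t0‖ = 1 := by
    rw [ht0def, norm_smul, norm_inv, norm_norm]
    exact inv_mul_cancel₀ (ne_of_gt hDnorm)
  have hUtu : ∀ i x, U i x = t0 i * u0 x := by
    intro i x
    rw [ht0app, hu0def, hd i x]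
    field_simp
  have hu0diff : Differentiable ℝ u0 := by
    rw [hu0def]; exact (hUdiff i0).const_mul _
  have hu0x1 : u0 x1 ≠ 0 := by
    rw [hu0def]; exact mul_ne_zero (ne_of_gt hDnorm) hx1
  have hPu : (∫ x, |u0 x| ^ p) = ‖D‖ ^ p * ∫ x, |U i0 x| ^ p := by
    rw [← integral_const_mul]
    congr 1; funext x
    rw [hu0def]
    rw [abs_mul, abs_of_pos hDnorm, Real.mul_rpow hDnorm.le (abs_nonneg _)]
  have hfu : ∀ x, fderiv ℝ u0 x = ‖D‖ • fderiv ℝ (U i0) x := by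
    intro x; rw [hu0def, fderiv_const_mul (hUdiff i0 x) ‖D‖]
  have hEu : (∫ x, ‖fderiv ℝ u0 x‖ ^ 2) = ‖D‖ ^ 2 * ∫ x, ‖fderiv ℝ (U i0) x‖ ^ 2 := by
    rw [← integral_const_mul]
    congr 1; funext x
    rw [hfu x, norm_smul, Real.norm_eq_abs, abs_of_pos hDnorm, mul_pow]
  have hu0scalar : (∫ x, |u0 x| ^ p) ^ r⁻¹ = A0 * ∫ x, ‖fderiv ℝ u0 x‖ ^ 2 := by
    rw [hPu, hEu, Real.mul_rpow (Real.rpow_nonneg hDnorm.le p) (hPnonneg i0)]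
    have h3 : (‖D‖ ^ p) ^ r⁻¹ = ‖D‖ ^ 2 := by
      rw [← Real.rpow_natCast ‖D‖ 2, ← Real.rpow_mul hDnorm.le]
      congr 1
      rw [hrdef]
      push_cast
      field_simp
    rw [h3, hscalEq i0]
    ring
  set sgn : ℝ := if 0 < u0 x1 then 1 else -1 with hsgndef
  have hsgn2 : sgn * sgn = 1 := by rw [hsgndef]; split_ifs <;> norm_num
  have hsgnabs : |sgn| = 1 := by rw [hsgndef]; split_ifs <;> norm_num
  have hsgnu : 0 < sgn * u0 x1 := by
    rw [hsgndef]
    split_ifs with h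
    · simpa using h
    · have hlt : u0 x1 < 0 := lt_of_le_of_ne (not_lt.1 h) hu0x1
      rw [neg_one_mul]
      exact neg_pos.2 hlt
  refine ⟨sgn • t0, ?_, ?_, (fun x => sgn * u0 x), ?_, ?_, ?_⟩
  · rw [norm_smul, Real.norm_eq_abs, hsgnabs, one_mul, ht0norm]
  · have hx1F := hFptwise x1
    have hUvec : WithLp.toLp 2 (fun i => U i x1) = (sgn * u0 x1) • (sgn • t0) := by
      ext i
      rw [PiLp.toLp_apply, PiLp.smul_apply, PiLp.smul_apply, smul_eq_mul, smul_eq_mul, hUtu i x1]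
      linear_combination (-(t0 i * u0 x1)) * hsgn2
    have hSx1 : S x1 = (u0 x1) ^ 2 := by
      have hstep1 : S x1 = ∑ i, (t0 i * u0 x1) ^ 2 := by
        rw [hSdef]
        exact Finset.sum_congr rfl fun i _ => by rw [hUtu i x1]
      rw [hstep1]
      calc ∑ i, (t0 i * u0 x1) ^ 2 = ∑ i, (t0 i) ^ 2 * (u0 x1) ^ 2 :=
            Finset.sum_congr rfl fun i _ => by ring
        _ = (∑ i, (t0 i) ^ 2) * (u0 x1) ^ 2 := (Finset.sum_mul _ _ _).symm
        _ = (u0 x1) ^ 2 := by rw [← hnormsq t0, ht0norm]; norm_num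
    have h1 : F ((sgn * u0 x1) • (sgn • t0)) = (sgn * u0 x1) ^ p * F (sgn • t0) :=
      hFhom _ hsgnu _
    rw [← hUvec, hx1F] at h1
    have h2 : S x1 ^ r = (sgn * u0 x1) ^ p := by
      rw [hSx1]
      calc ((u0 x1) ^ 2) ^ r = |u0 x1| ^ p := habs _
        _ = (sgn * u0 x1) ^ p := by
            have habs2 : |sgn * u0 x1| = |u0 x1| := by rw [abs_mul, hsgnabs, one_mul]
            rw [← habs2, abs_of_pos hsgnu]
    rw [h2] at h1
    have hpos : 0 < (sgn * u0 x1) ^ p := Real.rpow_pos_of_pos hsgnu p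
    apply mul_left_cancel₀ (ne_of_gt hpos)
    linear_combination -h1
  · intro h
    have h0 := congrFun h x1
    simp only [Pi.zero_apply] at h0
    exact absurd h0 (ne_of_gt hsgnu)
  · have hab : ∀ x, |sgn * u0 x| = |u0 x| := fun x => by
      rw [abs_mul, hsgnabs, one_mul]
    have hfd : ∀ x, fderiv ℝ (fun y => sgn * u0 y) x = sgn • fderiv ℝ u0 x :=
      fun x => fderiv_const_mul (hu0diff x) sgn
    have h1 : (∫ x, |sgn * u0 x| ^ p) = ∫ x, |u0 x| ^ p := by
      congr 1; funext x; rw [hab]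
    have h2 : (∫ x, ‖fderiv ℝ (fun y => sgn * u0 y) x‖ ^ 2) =
        ∫ x, ‖fderiv ℝ u0 x‖ ^ 2 := by
      congr 1; funext x
      rw [hfd, norm_smul, Real.norm_eq_abs, hsgnabs, one_mul]
    rw [h1, h2]
    exact hu0scalar
  · intro i x
    rw [PiLp.smul_apply, smul_eq_mul, hUtu i x]
    linear_combination (-(t0 i * u0 x)) * hsgn2
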